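/- Let U_X ≥ L_X be reals, T > 0, and suppose φ : [0,T] → [L_X, U_X] is measurable. Let κ ~ Poisson((U_X − L_X)T) and, given κ, let ξ₁,…,ξ_κ be i.i.d. Uniform[0,T]. Then E[∏_{i=1}^{κ} (U_X − φ(ξᵢ))/(U_X − L_X)] = exp(−∫₀ᵀ (φ(s) − L_X) ds). -/

import Mathlib

open MeasureTheory ProbabilityTheory
open scoped ENNReal

lemma stmt15_exp_tsum (x : ℝ) : ∑' k : ℕ, x ^ k / (Nat.factorial k : ℝ) = Real.exp x := by
  rw [Real.exp_eq_exp_ℝ, NormedSpace.exp_eq_tsum_div]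

/-- The Poisson estimator identity: if `κ ~ Poisson((U−L)T)` and, independently of `κ`,
`ξ₁, ξ₂, …` are i.i.d. `Uniform[0,T]`, and `φ : [0,T] → [L,U]` is measurable, then
`E[∏_{i=1}^{κ} (U − φ(ξᵢ))/(U − L)] = exp(−∫₀ᵀ (φ(s) − L) ds)` (the empty product being `1`). -/
theorem stmt15 {Ω : Type*} [MeasurableSpace Ω] (P : Measure Ω) [IsProbabilityMeasure P]
    (L U T : ℝ) (hLU : L ≤ U) (hT : 0 < T)
    (φ : ℝ → ℝ) (hφmeas : Measurable φ)
    (hφ : ∀ s ∈ Set.Icc (0:ℝ) T, φ s ∈ Set.Icc L U)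
    (κ : Ω → ℕ) (ξ : ℕ → Ω → ℝ)
    (hκmeas : Measurable κ) (hξmeas : ∀ i, Measurable (ξ i))
    (hκ : ∀ k : ℕ, P {ω | κ ω = k}
      = ENNReal.ofReal (Real.exp (-(U - L) * T) * ((U - L) * T) ^ k / k.factorial))
    (hξ : ∀ i, Measure.map (ξ i) P = ENNReal.ofReal T⁻¹ • volume.restrict (Set.Icc 0 T))
    (hξiid : iIndepFun ξ P)
    (hindep : IndepFun κ (fun ω (i : ℕ) => ξ i ω) P) :
    ∫ ω, ∏ i ∈ Finset.range (κ ω), (U - φ (ξ i ω)) / (U - L) ∂P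
      = Real.exp (-(∫ s in Set.Icc (0:ℝ) T, (φ s - L))) := by
  classical
  -- the truncated version of φ, valued in [L, U] everywhere
  set ψ : ℝ → ℝ := fun x => max L (min U (φ x)) with hψdef
  have hψmeas : Measurable ψ := measurable_const.max (measurable_const.min hφmeas)
  have hψmem : ∀ x, ψ x ∈ Set.Icc L U := fun x =>
    ⟨le_max_left _ _, max_le hLU (min_le_left _ _)⟩
  have hψeq : ∀ s ∈ Set.Icc (0:ℝ) T, ψ s = φ s := by
    intro s hs
    have h := hφ s hs
    simp only [hψdef]
    rw [min_eq_right h.2, max_eq_right h.1]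
  set f : ℝ → ℝ := fun x => (U - ψ x) / (U - L) with hfdef
  have hfmeas : Measurable f := (measurable_const.sub hψmeas).div_const _
  have hf0 : ∀ x, 0 ≤ f x := fun x =>
    div_nonneg (sub_nonneg.2 (hψmem x).2) (sub_nonneg.2 hLU)
  have hf1 : ∀ x, f x ≤ 1 := by
    intro x
    rcases eq_or_lt_of_le hLU with h | h
    · simp only [hfdef, ← h, sub_self, div_zero]; norm_num
    · exact div_le_one_of_le₀ (by linarith [(hψmem x).1]) (by linarith)
  set F : ℝ → ℝ≥0∞ := fun x => ENNReal.ofReal (f x) with hFdef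
  have hFmeas : Measurable F := ENNReal.measurable_ofReal.comp hfmeas
  -- ξ i lands in [0,T] almost surely
  have hξI : ∀ i, ∀ᵐ ω ∂P, ξ i ω ∈ Set.Icc (0:ℝ) T := by
    intro i
    have h0 : P (ξ i ⁻¹' (Set.Icc (0:ℝ) T)ᶜ) = 0 := by
      rw [← Measure.map_apply (hξmeas i) measurableSet_Icc.compl, hξ i]
      simp [Measure.restrict_apply measurableSet_Icc.compl]
    exact Filter.eventually_of_mem (compl_mem_ae_iff.mpr h0) (fun ω hω => by
      simpa using hω)
  have hae : ∀ᵐ ω ∂P, ∀ i, ξ i ω ∈ Set.Icc (0:ℝ) T := ae_all_iff.2 hξI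
  -- replace φ by ψ in the left-hand side
  have hLHS : ∫ ω, ∏ i ∈ Finset.range (κ ω), (U - φ (ξ i ω)) / (U - L) ∂P
      = ∫ ω, ∏ i ∈ Finset.range (κ ω), f (ξ i ω) ∂P := by
    apply integral_congr_ae
    filter_upwards [hae] with ω hω
    exact Finset.prod_congr rfl fun i _ => by
      show (U - φ (ξ i ω)) / (U - L) = (U - ψ (ξ i ω)) / (U - L)
      rw [hψeq _ (hω i)]
  -- replace φ by ψ in the right-hand side
  have hRHS : ∫ s in Set.Icc (0:ℝ) T, (φ s - L) = ∫ s in Set.Icc (0:ℝ) T, (ψ s - L) := by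
    apply setIntegral_congr_fun measurableSet_Icc
    intro s hs
    show φ s - L = ψ s - L
    rw [hψeq s hs]
  rw [hLHS, hRHS]
  -- measurability of the product functions
  have hprodmeasR : Measurable (fun ω => ∏ i ∈ Finset.range (κ ω), f (ξ i ω)) := by
    have h : (fun ω => ∏ i ∈ Finset.range (κ ω), f (ξ i ω))
        = (fun p : (ℕ → ℝ) × ℕ => ∏ i ∈ Finset.range p.2, f (p.1 i)) ∘
          (fun ω => ((fun i => ξ i ω), κ ω)) := rfl
    rw [h]
    refine (measurable_from_prod_countable_left fun n => ?_).comp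
      ((measurable_pi_lambda _ hξmeas).prodMk hκmeas)
    show Measurable fun v : ℕ → ℝ => ∏ i ∈ Finset.range n, f (v i)
    exact Finset.measurable_prod _ fun i _ => hfmeas.comp (measurable_pi_apply i)
  have hprodmeasE : Measurable (fun ω => ∏ i ∈ Finset.range (κ ω), F (ξ i ω)) := by
    have h : (fun ω => ∏ i ∈ Finset.range (κ ω), F (ξ i ω))
        = (fun p : (ℕ → ℝ) × ℕ => ∏ i ∈ Finset.range p.2, F (p.1 i)) ∘
          (fun ω => ((fun i => ξ i ω), κ ω)) := rfl
    rw [h]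
    refine (measurable_from_prod_countable_left fun n => ?_).comp
      ((measurable_pi_lambda _ hξmeas).prodMk hκmeas)
    show Measurable fun v : ℕ → ℝ => ∏ i ∈ Finset.range n, F (v i)
    exact Finset.measurable_prod _ fun i _ => hFmeas.comp (measurable_pi_apply i)
  -- express the Bochner integral as a Lebesgue integral
  have hBL : ∫ ω, ∏ i ∈ Finset.range (κ ω), f (ξ i ω) ∂P
      = (∫⁻ ω, ∏ i ∈ Finset.range (κ ω), F (ξ i ω) ∂P).toReal := by
    rw [integral_eq_lintegral_of_nonneg_ae
      (Filter.Eventually.of_forall fun ω => Finset.prod_nonneg fun i _ => hf0 _)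
      hprodmeasR.aestronglyMeasurable]
    congr 1
    apply lintegral_congr
    intro ω
    rw [ENNReal.ofReal_prod_of_nonneg fun i _ => hf0 _]
  rw [hBL]
  -- the common value of ∫⁻ F (ξ i ·)
  have hIint : Integrable f (volume.restrict (Set.Icc (0:ℝ) T)) := by
    apply Integrable.mono' (integrable_const (1:ℝ)) hfmeas.aestronglyMeasurable
    filter_upwards with x
    rw [Real.norm_eq_abs, abs_of_nonneg (hf0 x)]
    exact hf1 x
  set I : ℝ := ∫ s in Set.Icc (0:ℝ) T, f s with hIdef
  have hI0 : 0 ≤ I := integral_nonneg fun x => hf0 x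
  set m : ℝ := T⁻¹ * I with hmdef
  have hm0 : 0 ≤ m := mul_nonneg (inv_nonneg.2 hT.le) hI0
  have hone : ∀ i, ∫⁻ ω, F (ξ i ω) ∂P = ENNReal.ofReal m := by
    intro i
    have h1 : ∫⁻ ω, F (ξ i ω) ∂P = ∫⁻ x, F x ∂(Measure.map (ξ i) P) :=
      (lintegral_map hFmeas (hξmeas i)).symm
    rw [h1, hξ i, lintegral_smul_measure,
      ← ofReal_integral_eq_lintegral_ofReal hIint (Filter.Eventually.of_forall hf0), smul_eq_mul,
      ← ENNReal.ofReal_mul (inv_nonneg.2 hT.le)]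
  -- decompose the Lebesgue integral according to the value of κ
  set H : ℕ → Ω → ℝ≥0∞ := fun k ω => ∏ i ∈ Finset.range k, F (ξ i ω) with hHdef
  have hHmeas : ∀ k, Measurable (H k) := fun k =>
    Finset.measurable_prod _ fun i _ => hFmeas.comp (hξmeas i)
  have hsetmeas : ∀ k : ℕ, MeasurableSet {ω | κ ω = k} := fun k =>
    hκmeas (measurableSet_singleton k)
  have hpart : (fun ω => ∏ i ∈ Finset.range (κ ω), F (ξ i ω))
      = fun ω => ∑' k : ℕ, Set.indicator {ω | κ ω = k} (H k) ω := by
    funext ω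
    rw [tsum_eq_single (κ ω)]
    · simp [Set.indicator_apply, hHdef]
    · intro k hk
      simp [Set.indicator_apply, Ne.symm hk]
  -- iid: expectation of the product is the product of expectations
  have hFiid : iIndepFun (fun i => F ∘ ξ i) P :=
    hξiid.comp (fun _ => F) (fun _ => hFmeas)
  have hiidprod : ∀ k : ℕ, ∫⁻ ω, H k ω ∂P = (ENNReal.ofReal m) ^ k := by
    intro k
    induction k with
    | zero => simp [hHdef]
    | succ n ih =>
      have hIF : IndepFun (∏ j ∈ Finset.range n, (F ∘ ξ j)) (F ∘ ξ n) P :=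
        hFiid.indepFun_prod_range_succ (fun i => hFmeas.comp (hξmeas i)) n
      have heq : ∀ ω, H (n + 1) ω = ((∏ j ∈ Finset.range n, (F ∘ ξ j)) * (F ∘ ξ n)) ω := by
        intro ω
        simp [hHdef, Finset.prod_range_succ, Finset.prod_apply]
      calc ∫⁻ ω, H (n + 1) ω ∂P
          = ∫⁻ ω, ((∏ j ∈ Finset.range n, (F ∘ ξ j)) * (F ∘ ξ n)) ω ∂P :=
            lintegral_congr heq
        _ = (∫⁻ ω, (∏ j ∈ Finset.range n, (F ∘ ξ j)) ω ∂P) * ∫⁻ ω, (F ∘ ξ n) ω ∂P :=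
            lintegral_mul_eq_lintegral_mul_lintegral_of_indepFun
              (by rw [Finset.prod_fn];
                  exact Finset.measurable_prod _ fun i _ => hFmeas.comp (hξmeas i))
              (hFmeas.comp (hξmeas n)) hIF
        _ = (∫⁻ ω, H n ω ∂P) * ENNReal.ofReal m := by
            rw [show (∫⁻ ω, (F ∘ ξ n) ω ∂P) = ∫⁻ ω, F (ξ n ω) ∂P from rfl, hone n]
            congr 1
            apply lintegral_congr
            intro ω
            simp [hHdef, Finset.prod_apply]
        _ = (ENNReal.ofReal m) ^ (n + 1) := by rw [ih, pow_succ]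
  -- independence of κ and the product
  have hkey : ∀ k : ℕ, ∫⁻ ω, Set.indicator {ω | κ ω = k} (H k) ω ∂P
      = P {ω | κ ω = k} * (ENNReal.ofReal m) ^ k := by
    intro k
    have hrw : ∀ ω, Set.indicator {ω | κ ω = k} (H k) ω
        = Set.indicator {ω | κ ω = k} (1 : Ω → ℝ≥0∞) ω * H k ω := by
      intro ω
      by_cases h : κ ω = k <;> simp [Set.indicator_apply, h]
    have h1 : Set.indicator {ω | κ ω = k} (1 : Ω → ℝ≥0∞)
        = (fun n : ℕ => Set.indicator ({k} : Set ℕ) (1 : ℕ → ℝ≥0∞) n) ∘ κ := by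
      funext ω
      by_cases h : κ ω = k <;> simp [Set.indicator_apply, h]
    have h2 : H k = (fun v : ℕ → ℝ => ∏ i ∈ Finset.range k, F (v i)) ∘
        (fun ω (i : ℕ) => ξ i ω) := rfl
    have hm1 : Measurable (fun n : ℕ => Set.indicator ({k} : Set ℕ) (1 : ℕ → ℝ≥0∞) n) :=
      measurable_const.indicator (measurableSet_singleton k)
    have hm2 : Measurable (fun v : ℕ → ℝ => ∏ i ∈ Finset.range k, F (v i)) :=
      Finset.measurable_prod _ fun i _ => hFmeas.comp (measurable_pi_apply i)
    have hIndep : IndepFun (Set.indicator {ω | κ ω = k} (1 : Ω → ℝ≥0∞)) (H k) P := by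
      rw [h1, h2]
      exact hindep.comp hm1 hm2
    calc ∫⁻ ω, Set.indicator {ω | κ ω = k} (H k) ω ∂P
        = ∫⁻ ω, (Set.indicator {ω | κ ω = k} (1 : Ω → ℝ≥0∞) * H k) ω ∂P :=
          lintegral_congr hrw
      _ = (∫⁻ ω, Set.indicator {ω | κ ω = k} (1 : Ω → ℝ≥0∞) ω ∂P) *
            ∫⁻ ω, H k ω ∂P :=
          lintegral_mul_eq_lintegral_mul_lintegral_of_indepFun
            (measurable_const.indicator (hsetmeas k)) (hHmeas k) hIndep
      _ = P {ω | κ ω = k} * (ENNReal.ofReal m) ^ k := by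
          rw [lintegral_indicator_one (hsetmeas k), hiidprod k]
  -- putting it together: the Lebesgue integral is the Poisson sum
  set lam : ℝ := (U - L) * T with hlamdef
  have hlam0 : 0 ≤ lam := mul_nonneg (sub_nonneg.2 hLU) hT.le
  clear_value I m lam
  have hterm0 : ∀ k : ℕ, 0 ≤ Real.exp (-lam) * lam ^ k / (Nat.factorial k : ℝ) * m ^ k := by
    intro k
    positivity
  have htermeq : ∀ k : ℕ, Real.exp (-lam) * lam ^ k / (Nat.factorial k : ℝ) * m ^ k
      = Real.exp (-lam) * ((lam * m) ^ k / (Nat.factorial k : ℝ)) := by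
    intro k
    rw [mul_pow]
    ring
  have hsumm : Summable (fun k : ℕ => Real.exp (-lam) * lam ^ k / (Nat.factorial k : ℝ) * m ^ k) := by
    apply Summable.congr ((Real.summable_pow_div_factorial (lam * m)).mul_left (Real.exp (-lam)))
    intro k
    rw [htermeq k]
  have hLint : ∫⁻ ω, ∏ i ∈ Finset.range (κ ω), F (ξ i ω) ∂P
      = ENNReal.ofReal (Real.exp (lam * m - lam)) := by
    rw [hpart, lintegral_tsum fun k =>
      ((hHmeas k).indicator (hsetmeas k)).aemeasurable]
    have : ∀ k : ℕ, ∫⁻ ω, Set.indicator {ω | κ ω = k} (H k) ω ∂P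
        = ENNReal.ofReal (Real.exp (-lam) * lam ^ k / (Nat.factorial k : ℝ) * m ^ k) := by
      intro k
      rw [hkey k, hκ k]
      rw [← ENNReal.ofReal_pow hm0, ← ENNReal.ofReal_mul (by positivity)]
      rw [hlamdef, neg_mul]
    rw [tsum_congr this, ← ENNReal.ofReal_tsum_of_nonneg hterm0 hsumm]
    congr 1
    calc ∑' k : ℕ, Real.exp (-lam) * lam ^ k / (Nat.factorial k : ℝ) * m ^ k
        = ∑' k : ℕ, Real.exp (-lam) * ((lam * m) ^ k / (Nat.factorial k : ℝ)) :=
          tsum_congr htermeq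
      _ = Real.exp (-lam) * ∑' k : ℕ, (lam * m) ^ k / (Nat.factorial k : ℝ) := tsum_mul_left
      _ = Real.exp (-lam) * Real.exp (lam * m) := by rw [stmt15_exp_tsum]
      _ = Real.exp (lam * m - lam) := by rw [← Real.exp_add]; ring_nf
  rw [hLint, ENNReal.toReal_ofReal (Real.exp_nonneg _)]
  -- final arithmetic: lam * m - lam = -(∫ (ψ - L))
  congr 1
  have hintψ : Integrable (fun s => ψ s - L) (volume.restrict (Set.Icc (0:ℝ) T)) := by
    apply Integrable.mono' (integrable_const (U - L)) ((hψmeas.sub measurable_const).aestronglyMeasurable)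
    filter_upwards with x
    simp only [Pi.sub_apply]
    rw [Real.norm_eq_abs, abs_of_nonneg (sub_nonneg.2 (hψmem x).1)]
    linarith [(hψmem x).2]
  have hintUψ : Integrable (fun s => U - ψ s) (volume.restrict (Set.Icc (0:ℝ) T)) := by
    apply Integrable.mono' (integrable_const (U - L)) ((measurable_const.sub hψmeas).aestronglyMeasurable)
    filter_upwards with x
    simp only [Pi.sub_apply]
    rw [Real.norm_eq_abs, abs_of_nonneg (sub_nonneg.2 (hψmem x).2)]
    linarith [(hψmem x).1]
  have hfUψ : ∀ x, (U - L) * f x = U - ψ x := by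
    intro x
    rcases eq_or_lt_of_le hLU with h | h
    · have : ψ x = U := le_antisymm (hψmem x).2 (h ▸ (hψmem x).1)
      rw [this]
      simp [← h]
    · rw [hfdef]
      rw [mul_div_assoc', mul_comm, mul_div_assoc, div_self (sub_ne_zero.2 h.ne'), mul_one]
  have hlamm : lam * m = ∫ s in Set.Icc (0:ℝ) T, (U - ψ s) := by
    have h1 : lam * m = (U - L) * I := by
      rw [hlamdef, hmdef]
      field_simp
    rw [h1, hIdef, ← integral_const_mul]
    apply setIntegral_congr_fun measurableSet_Icc
    intro s _
    exact hfUψ s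
  have hsum : (∫ s in Set.Icc (0:ℝ) T, (ψ s - L)) + (∫ s in Set.Icc (0:ℝ) T, (U - ψ s))
      = lam := by
    rw [← integral_add hintψ hintUψ]
    have h : (fun s => (ψ s - L) + (U - ψ s)) = fun _ : ℝ => U - L := by
      funext s
      ring
    rw [h, setIntegral_const]
    simp [Real.volume_Icc, ENNReal.toReal_ofReal hT.le, hlamdef, mul_comm, max_eq_left hT.le]
  linarith [hlamm, hsum]
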